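/- Let M be a compact subset of ℝ² whose boundary contains no vertical interval. Define a decomposition 𝒢₀ of ℝ² whose nondegenerate elements are the connected components of V ∩ M over all vertical lines V (these components are points or vertical closed intervals), with all other elements singletons. Then 𝒢₀ is an upper semicontinuous cellular decomposition of ℝ². -/

import Mathlib

open Set Function Topology Filter

/-- The plane. -/
abbrev Plane := EuclideanSpace ℝ (Fin 2)

/-- A family of subsets is upper semicontinuous (in the sequential sense). -/
def IsUSCFamily {α : Type*} [TopologicalSpace α] (G : Set (Set α)) : Prop :=
  ∀ (g : ℕ → Set α) (x y : ℕ → α) (x₀ y₀ : α),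
    (∀ n, g n ∈ G) → (∀ n, x n ∈ g n) → (∀ n, y n ∈ g n) →
    Tendsto x atTop (nhds x₀) → Tendsto y atTop (nhds y₀) →
    ∃ g₀ ∈ G, x₀ ∈ g₀ ∧ y₀ ∈ g₀

/-- The vertical decomposition of the plane determined by `M`: the connected
components of the intersections of `M` with vertical lines, together with the
singletons of points outside `M`. -/
def verticalDecomp (M : Set Plane) : Set (Set Plane) :=
  {g | (∃ x ∈ M, g = connectedComponentIn ({p : Plane | p 0 = x 0} ∩ M) x) ∨
    ∃ x ∉ M, g = ({x} : Set Plane)}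

/-- A preconnected subset of a vertical line is convex. -/
lemma convex_of_vertical {a : ℝ} {s : Set Plane} (hs : IsPreconnected s)
    (hline : ∀ p ∈ s, p 0 = a) : Convex ℝ s := by
  intro p hp q hq t1 t2 ht1 ht2 hsum
  set r := t1 • p + t2 • q with hr
  have hr1 : r 1 = t1 * p 1 + t2 * q 1 := by
    simp [hr, PiLp.add_apply, PiLp.smul_apply]
  have hr0 : r 0 = a := by
    have : r 0 = t1 * p 0 + t2 * q 0 := by
      simp [hr, PiLp.add_apply, PiLp.smul_apply]
    rw [this, hline p hp, hline q hq]; linear_combination a * hsum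
  have hI : ((fun p : Plane => p 1) '' s).OrdConnected :=
    (hs.image _ ((EuclideanSpace.proj (𝕜 := ℝ) 1).continuous.continuousOn)).ordConnected
  have hr1mem : r 1 ∈ (fun p : Plane => p 1) '' s := by
    rcases le_total (p 1) (q 1) with h | h
    · refine hI.out ⟨p, hp, rfl⟩ ⟨q, hq, rfl⟩ ?_
      simp only [mem_Icc, hr1]
      refine ⟨?_, ?_⟩
      · linarith [mul_le_mul_of_nonneg_left h ht2,
          (by linear_combination p 1 * hsum : t1 * p 1 + t2 * p 1 = p 1)]
      · linarith [mul_le_mul_of_nonneg_left h ht1,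
          (by linear_combination q 1 * hsum : t1 * q 1 + t2 * q 1 = q 1)]
    · refine hI.out ⟨q, hq, rfl⟩ ⟨p, hp, rfl⟩ ?_
      simp only [mem_Icc, hr1]
      refine ⟨?_, ?_⟩
      · linarith [mul_le_mul_of_nonneg_left h ht1,
          (by linear_combination q 1 * hsum : t1 * q 1 + t2 * q 1 = q 1)]
      · linarith [mul_le_mul_of_nonneg_left h ht2,
          (by linear_combination p 1 * hsum : t1 * p 1 + t2 * p 1 = p 1)]
  obtain ⟨w, hw, hw1⟩ := hr1mem
  have h0 : w 0 = r 0 := (hline w hw).trans hr0.symm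
  have hwr : w = r := WithLp.ofLp_injective 2 (funext (Fin.forall_fin_two.2 ⟨h0, hw1⟩))
  exact hwr ▸ hw

lemma comp_convex (M : Set Plane) {z : Plane} :
    Convex ℝ (connectedComponentIn ({p : Plane | p 0 = z 0} ∩ M) z) :=
  convex_of_vertical isPreconnected_connectedComponentIn
    (fun p hp => (connectedComponentIn_subset _ _ hp).1)

lemma comp_subset_M (M : Set Plane) {z : Plane} :
    connectedComponentIn ({p : Plane | p 0 = z 0} ∩ M) z ⊆ M :=
  (connectedComponentIn_subset _ _).trans inter_subset_right

lemma vd_eq_of_mem {M : Set Plane} {g : Set Plane} {z : Plane}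
    (hg : g ∈ verticalDecomp M) (hz : z ∈ g) :
    (z ∈ M ∧ g = connectedComponentIn ({p : Plane | p 0 = z 0} ∩ M) z) ∨
    (z ∉ M ∧ g = {z}) := by
  rcases hg with ⟨w, hw, rfl⟩ | ⟨w, hw, rfl⟩
  · have hzS : z ∈ {p : Plane | p 0 = w 0} ∩ M := connectedComponentIn_subset _ _ hz
    left
    refine ⟨hzS.2, ?_⟩
    have hset : {p : Plane | p 0 = w 0} = {p : Plane | p 0 = z 0} := by
      rw [hzS.1]
    rw [connectedComponentIn_eq hz, hset]
  · right
    exact ⟨by simpa using hz ▸ hw, by simp_all⟩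

lemma vd_mem_elt (M : Set Plane) (x : Plane) :
    ∃ g₀ ∈ verticalDecomp M, x ∈ g₀ := by
  by_cases hx : x ∈ M
  · exact ⟨_, Or.inl ⟨x, hx, rfl⟩, mem_connectedComponentIn ⟨rfl, hx⟩⟩
  · exact ⟨{x}, Or.inr ⟨x, hx, rfl⟩, rfl⟩

/-- If `M` is a compact planar set whose boundary contains no vertical
interval, then the vertical decomposition of the plane (components of
intersections of `M` with vertical lines, extended trivially) is an upper
semicontinuous decomposition of the plane into cellular elements: each element
is a nonempty compact convex set (a point or a vertical closed interval). -/
theorem stmt_18 (M : Set Plane) (hM : IsCompact M)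
    (hnovert : ∀ a c d : ℝ, c < d →
      ¬ ({p : Plane | p 0 = a ∧ p 1 ∈ Set.Icc c d} ⊆ frontier M)) :
    (⋃₀ verticalDecomp M = univ) ∧
    ((verticalDecomp M).Pairwise fun g₁ g₂ => Disjoint g₁ g₂) ∧
    IsUSCFamily (verticalDecomp M) ∧
    (∀ g ∈ verticalDecomp M, g.Nonempty ∧ IsCompact g ∧ Convex ℝ g) := by
  refine ⟨?_, ?_, ?_, ?_⟩
  · -- covering
    apply eq_univ_of_forall
    intro x
    obtain ⟨g₀, hg₀, hx⟩ := vd_mem_elt M x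
    exact ⟨g₀, hg₀, hx⟩
  · -- pairwise disjoint
    intro g₁ hg₁ g₂ hg₂ hne
    rw [Set.disjoint_left]
    intro z hz₁ hz₂
    rcases vd_eq_of_mem hg₁ hz₁ with ⟨hzM1, h₁⟩ | ⟨hzM1, h₁⟩ <;>
      rcases vd_eq_of_mem hg₂ hz₂ with ⟨hzM2, h₂⟩ | ⟨hzM2, h₂⟩ <;>
      first
        | exact hne (h₁.trans h₂.symm)
        | exact absurd hzM1 hzM2
        | exact absurd hzM2 hzM1
  · -- upper semicontinuity
    intro g x y x₀ y₀ hgG hxg hyg hx hy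
    by_cases hfreq : ∃ᶠ n in atTop, x n = y n
    · have hxy : x₀ = y₀ := tendsto_nhds_unique_of_frequently_eq hx hy hfreq
      obtain ⟨g₀, hg₀, hmem⟩ := vd_mem_elt M x₀
      exact ⟨g₀, hg₀, hmem, hxy ▸ hmem⟩
    · have hev : ∀ᶠ n in atTop, ∃ z ∈ M,
          g n = connectedComponentIn ({p : Plane | p 0 = z 0} ∩ M) z := by
        filter_upwards [not_frequently.mp hfreq] with n hn
        rcases hgG n with h | ⟨z, _, hzg⟩
        · exact h
        · exfalso
          apply hn
          have h1 : x n ∈ ({z} : Set Plane) := hzg ▸ hxg n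
          have h2 : y n ∈ ({z} : Set Plane) := hzg ▸ hyg n
          simp only [mem_singleton_iff] at h1 h2
          rw [h1, h2]
      -- membership facts
      have hxM : ∀ᶠ n in atTop, x n ∈ M := by
        filter_upwards [hev] with n ⟨z, hz, he⟩
        exact comp_subset_M M (he ▸ hxg n)
      have hline : ∀ᶠ n in atTop, (x n) 0 = (y n) 0 := by
        filter_upwards [hev] with n ⟨z, hz, he⟩
        have h1 := (connectedComponentIn_subset _ _ (he ▸ hxg n)).1
        have h2 := (connectedComponentIn_subset _ _ (he ▸ hyg n)).1
        exact h1.trans h2.symm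
      have hx0M : x₀ ∈ M := hM.isClosed.mem_of_tendsto hx hxM
      have hproj : Continuous (fun p : Plane => p 0) :=
        (EuclideanSpace.proj (𝕜 := ℝ) 0).continuous
      have hx0t : Tendsto (fun n => (x n) 0) atTop (nhds (x₀ 0)) :=
        (hproj.tendsto x₀).comp hx
      have hy0t : Tendsto (fun n => (y n) 0) atTop (nhds (y₀ 0)) :=
        (hproj.tendsto y₀).comp hy
      have ha : x₀ 0 = y₀ 0 :=
        tendsto_nhds_unique (hx0t.congr' hline) hy0t
      -- the limit segment lies in the vertical slice
      have hseg : segment ℝ x₀ y₀ ⊆ {p : Plane | p 0 = x₀ 0} ∩ M := by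
        rintro r ⟨t1, t2, ht1, ht2, hsum, rfl⟩
        constructor
        · have : (t1 • x₀ + t2 • y₀) 0 = t1 * x₀ 0 + t2 * y₀ 0 := by
            simp [PiLp.add_apply, PiLp.smul_apply]
          rw [mem_setOf_eq, this, ← ha]; linear_combination (x₀ 0) * hsum
        · have htend : Tendsto (fun n => t1 • x n + t2 • y n) atTop
              (nhds (t1 • x₀ + t2 • y₀)) :=
            (hx.const_smul t1).add (hy.const_smul t2)
          refine hM.isClosed.mem_of_tendsto htend ?_
          filter_upwards [hev] with n ⟨z, hz, he⟩
          have hconv : Convex ℝ (g n) := he ▸ comp_convex M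
          have : t1 • x n + t2 • y n ∈ g n := hconv (hxg n) (hyg n) ht1 ht2 hsum
          exact comp_subset_M M (he ▸ this)
      have hsub : segment ℝ x₀ y₀ ⊆
          connectedComponentIn ({p : Plane | p 0 = x₀ 0} ∩ M) x₀ :=
        (convex_segment x₀ y₀).isPreconnected.subset_connectedComponentIn
          (left_mem_segment ℝ x₀ y₀) hseg
      exact ⟨connectedComponentIn ({p : Plane | p 0 = x₀ 0} ∩ M) x₀,
        Or.inl ⟨x₀, hx0M, rfl⟩, mem_connectedComponentIn ⟨rfl, hx0M⟩,
        hsub (right_mem_segment ℝ x₀ y₀)⟩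
  · -- elements are nonempty compact convex
    rintro g (⟨z, hz, rfl⟩ | ⟨z, hz, rfl⟩)
    · refine ⟨⟨z, mem_connectedComponentIn ⟨rfl, hz⟩⟩, ?_, comp_convex M⟩
      have hSc : IsCompact ({p : Plane | p 0 = z 0} ∩ M) := by
        have hcl : IsClosed {p : Plane | p 0 = z 0} :=
          isClosed_eq (EuclideanSpace.proj (𝕜 := ℝ) 0).continuous continuous_const
        exact hM.inter_left hcl
      have hmem : z ∈ ({p : Plane | p 0 = z 0} ∩ M) := ⟨rfl, hz⟩
      rw [connectedComponentIn_eq_image hmem]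
      haveI : CompactSpace ({p : Plane | p 0 = z 0} ∩ M : Set Plane) :=
        isCompact_iff_compactSpace.mp hSc
      exact (isClosed_connectedComponent.isCompact).image continuous_subtype_val
    · exact ⟨⟨z, rfl⟩, isCompact_singleton, convex_singleton z⟩
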